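/- Let Γ be a group that has a torsion-free subgroup of finite index. Then every finite normal subgroup of Γ is contained in a maximal finite normal subgroup N of Γ, and the quotient Γ/N has no nontrivial finite normal subgroups. -/

import Mathlib

-- elements of a finite subgroup have finite order
lemma finOrd_of_mem {Γ : Type*} [Group Γ] {M : Subgroup Γ} (hM : (M : Set Γ).Finite)
    {g : Γ} (hg : g ∈ M) : IsOfFinOrder g := by
  haveI : Finite M := hM.to_subtype
  have := isOfFinOrder_of_finite (⟨g, hg⟩ : M)
  rw [isOfFinOrder_iff_pow_eq_one] at this ⊢
  obtain ⟨n, hn, h1⟩ := this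
  exact ⟨n, hn, by simpa [← Subgroup.coe_pow, Subgroup.coe_mk] using congrArg Subtype.val h1⟩

theorem exists_maximal_finite_normal_subgroup {Γ : Type*} [Group Γ]
    (Λ : Subgroup Γ) (hΛfree : ∀ g : Γ, g ∈ Λ → IsOfFinOrder g → g = 1)
    (hΛ : Λ.FiniteIndex) :
    ∃ (N : Subgroup Γ) (hN : N.Normal), (N : Set Γ).Finite ∧
      (∀ M : Subgroup Γ, M.Normal → (M : Set Γ).Finite → M ≤ N) ∧
      (letI := hN;
        ∀ M : Subgroup (Γ ⧸ N), M.Normal → (M : Set (Γ ⧸ N)).Finite → M = ⊥) := by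
  classical
  haveI := hΛ
  -- every finite normal subgroup has ncard ≤ card (Γ⧸Λ)
  have key : ∀ M : Subgroup Γ, (M : Set Γ).Finite → (M : Set Γ).ncard ≤ Nat.card (Γ ⧸ Λ) := by
    intro M hM
    have hinj : Set.InjOn (QuotientGroup.mk (s := Λ)) (M : Set Γ) := by
      intro a ha b hb hab
      rw [QuotientGroup.eq] at hab
      have hmem : a⁻¹ * b ∈ M := mul_mem (inv_mem ha) hb
      have : a⁻¹ * b = 1 := hΛfree _ hab (finOrd_of_mem hM hmem)
      exact inv_mul_eq_one.mp this
    calc (M : Set Γ).ncard = ((QuotientGroup.mk (s := Λ)) '' M).ncard :=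
          (Set.ncard_image_of_injOn hinj).symm
      _ ≤ Nat.card (Γ ⧸ Λ) := by
          rw [← Set.ncard_univ]
          exact Set.ncard_le_ncard (Set.subset_univ _) Set.finite_univ
  -- the set of cardinalities of finite normal subgroups
  set S : Set ℕ := {n | ∃ N : Subgroup Γ, N.Normal ∧ (N : Set Γ).Finite ∧ (N : Set Γ).ncard = n}
  have hSne : S.Nonempty := ⟨(⊥ : Subgroup Γ).carrier.ncard, ⊥, inferInstance, by
    simp [Set.finite_singleton], rfl⟩
  have hSbdd : BddAbove S := ⟨Nat.card (Γ ⧸ Λ), by rintro n ⟨N, hN, hfin, rfl⟩; exact key N hfin⟩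
  obtain ⟨N, hN, hNfin, hNcard⟩ := Nat.sSup_mem hSne hSbdd
  haveI := hN
  have hmax : ∀ M : Subgroup Γ, M.Normal → (M : Set Γ).Finite → M ≤ N := by
    intro M hM hMfin
    have hfin : ((M ⊔ N : Subgroup Γ) : Set Γ).Finite := by
      rw [Subgroup.mul_normal]
      exact hMfin.mul hNfin
    have hle : ((M ⊔ N : Subgroup Γ) : Set Γ).ncard ≤ sSup S :=
      le_csSup hSbdd ⟨M ⊔ N, inferInstance, hfin, rfl⟩
    have hsub : (N : Set Γ) ⊆ ((M ⊔ N : Subgroup Γ) : Set Γ) := SetLike.coe_subset_coe.mpr le_sup_right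
    have heq : (N : Set Γ) = ((M ⊔ N : Subgroup Γ) : Set Γ) :=
      Set.eq_of_subset_of_ncard_le hsub (hNcard ▸ hle) hfin
    have : M ⊔ N ≤ N := le_of_eq (SetLike.coe_injective heq.symm)
    exact le_trans le_sup_left this
  refine ⟨N, hN, hNfin, hmax, ?_⟩
  intro M hM hMfin
  -- preimage of M in Γ
  set P : Subgroup Γ := M.comap (QuotientGroup.mk' N)
  have hPnormal : P.Normal := Subgroup.Normal.comap hM _
  have hPfin : (P : Set Γ).Finite := by
    have : (P : Set Γ) = (QuotientGroup.mk (s := N)) ⁻¹' (M : Set (Γ ⧸ N)) := rfl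
    rw [this, ← Set.biUnion_preimage_singleton]
    refine Set.Finite.biUnion hMfin ?_
    intro q hq
    obtain ⟨g, rfl⟩ := QuotientGroup.mk_surjective q
    have : (QuotientGroup.mk (s := N)) ⁻¹' {(g : Γ ⧸ N)} = (g * ·) '' (N : Set Γ) := by
      ext x
      simp only [Set.mem_preimage, Set.mem_singleton_iff, Set.mem_image]
      constructor
      · intro h
        refine ⟨g⁻¹ * x, ?_, by group⟩
        have := (QuotientGroup.eq).mp h.symm
        simpa using this
      · rintro ⟨y, hy, rfl⟩
        symm
        rw [QuotientGroup.eq]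
        simpa using hy
    rw [this]
    exact hNfin.image _
  have hPle : P ≤ N := hmax P hPnormal hPfin
  have : M = P.map (QuotientGroup.mk' N) :=
    (Subgroup.map_comap_eq_self_of_surjective (QuotientGroup.mk'_surjective N) M).symm
  rw [this]
  refine le_antisymm ?_ bot_le
  intro x hx
  obtain ⟨g, hg, rfl⟩ := hx
  have : g ∈ N := hPle hg
  exact Subgroup.mem_bot.mpr ((QuotientGroup.eq_one_iff g).mpr this)
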